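/- Let H be a K3 crystal over W (of any finite rank) and let B be a B-field for H. Then the W-submodule e^B(H̃) ⊆ H̃ ⊗_W K is preserved by the semilinear extension of Φ̃ to H̃ ⊗_W K: Φ̃(e^B(H̃)) ⊆ e^B(H̃). -/

import Mathlib

open TensorProduct

section Crystal

/-- The submodule `pH` of a `W`-module `H`. -/
noncomputable def pMul (W : Type*) [CommRing W] (p : ℕ) (H : Type*) [AddCommGroup H]
    [Module W H] : Submodule W H :=
  LinearMap.range ((p : W) • (LinearMap.id : H →ₗ[W] H))

/-- A K3 crystal of rank `n` over `(W, σW)`: a free `W`-module `H` of rank `n` with a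
`σW`-semilinear map `Φ` and a perfect symmetric pairing `b` such that `p²H ⊆ Φ(H)`,
the image of `Φ` modulo `p` is one-dimensional, and `⟨Φx, Φy⟩ = p²·σW⟨x,y⟩`. -/
structure IsK3Crystal (p : ℕ) {W : Type*} [CommRing W] (σW : W →+* W) (n : ℕ)
    {H : Type*} [AddCommGroup H] [Module W H]
    (Φ : H →ₛₗ[σW] H) (b : LinearMap.BilinForm W H) : Prop where
  free : Module.Free W H
  rank_eq : Module.finrank W H = n
  p2_div : ∀ x : H, ∃ y : H, Φ y = ((p : W)) ^ 2 • x
  rank_le : ∃ h : H, ∀ x : H, ∃ c : W, Φ x - c • h ∈ pMul W p H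
  rank_ne : ∃ x : H, Φ x ∉ pMul W p H
  perfect : Function.Bijective b
  compat : ∀ x y : H, b (Φ x) (Φ y) = (p : W) ^ 2 * σW (b x y)

variable (p : ℕ) (W : Type*) [CommRing W] (K : Type*) [Field K] [Algebra W K]
variable (H : Type*) [AddCommGroup H] [Module W H]

/-- The image of `W` in `K`. -/
noncomputable def Wline : Submodule W K := LinearMap.range (Algebra.linearMap W K)

/-- The image of `H` in `H ⊗_W K`. -/
noncomputable def iotaH : Submodule W (K ⊗[W] H) :=
  LinearMap.range ((TensorProduct.mk W K H) (1 : K))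

/-- The Mukai lattice `H̃ = W ⊕ H ⊕ W` inside `H̃ ⊗ K = K × (H ⊗ K) × K`. -/
noncomputable def Htilde : Submodule W (K × (K ⊗[W] H) × K) :=
  (Wline W K).prod ((iotaH W K H).prod (Wline W K))

variable (σK : K →+* K) (ΦK : (K ⊗[W] H) →ₛₗ[σK] (K ⊗[W] H))

/-- The Mukai Frobenius `Φ̃(a,b,c) = (p·σ(a), Φ(b), p·σ(c))` on `H̃ ⊗ K`. -/
noncomputable def PhiTilde :
    (K × (K ⊗[W] H) × K) →ₛₗ[σK] (K × (K ⊗[W] H) × K) where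
  toFun x := ((p : K) * σK x.1, ΦK x.2.1, (p : K) * σK x.2.2)
  map_add' x y := by
    refine Prod.ext ?_ (Prod.ext ?_ ?_) <;>
      simp [Prod.fst_add, Prod.snd_add, map_add, mul_add]
  map_smul' c x := by
    refine Prod.ext ?_ (Prod.ext ?_ ?_)
    · simp only [Prod.smul_fst, Prod.smul_snd, smul_eq_mul, map_mul, RingHom.id_apply]
      ring
    · simp only [Prod.smul_fst, Prod.smul_snd, LinearMap.map_smulₛₗ]
    · simp only [Prod.smul_fst, Prod.smul_snd, smul_eq_mul, map_mul, RingHom.id_apply]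
      ring

/-- The B-field condition: `pB ∈ H` and `B - φ(B) ∈ H + φ(H)`, where `φ = p⁻¹Φ`. -/
def IsBField (B : K ⊗[W] H) : Prop :=
  (∃ x : H, (p : K) • B = (1 : K) ⊗ₜ[W] x) ∧
  (∃ x y : H, B - (p : K)⁻¹ • ΦK B =
    (1 : K) ⊗ₜ[W] x + (p : K)⁻¹ • ΦK ((1 : K) ⊗ₜ[W] y))

variable (b : LinearMap.BilinForm W H)

/-- The map `e^B (a,b,c) = (a, b + aB, c + ⟨b,B⟩ + a·B²/2)` on `H̃ ⊗ K`. -/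
noncomputable def eB (B : K ⊗[W] H) :
    (K × (K ⊗[W] H) × K) →ₗ[K] (K × (K ⊗[W] H) × K) where
  toFun x := (x.1, x.2.1 + x.1 • B,
    x.2.2 + (b.baseChange K) x.2.1 B + x.1 * ((b.baseChange K) B B / 2))
  map_add' x y := by
    refine Prod.ext ?_ (Prod.ext ?_ ?_)
    · simp [Prod.fst_add]
    · simp only [Prod.fst_add, Prod.snd_add, add_smul, Prod.fst, Prod.snd]
      abel
    · simp only [Prod.fst_add, Prod.snd_add, map_add, LinearMap.add_apply, add_mul,
        Prod.fst, Prod.snd]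
      ring
  map_smul' c x := by
    refine Prod.ext ?_ (Prod.ext ?_ ?_)
    · simp
    · simp only [Prod.smul_fst, Prod.smul_snd, smul_add, smul_smul, smul_eq_mul,
        RingHom.id_apply, Prod.fst, Prod.snd]
    · simp only [Prod.smul_fst, Prod.smul_snd, map_smul, LinearMap.smul_apply,
        smul_eq_mul, RingHom.id_apply, Prod.fst, Prod.snd]
      ring

/-- The twisted Mukai lattice `e^B(H̃) ⊆ H̃ ⊗ K`. -/
noncomputable def eBT (B : K ⊗[W] H) : Submodule W (K × (K ⊗[W] H) × K) :=
  (Htilde W K H).map (LinearMap.restrictScalars W (eB W K H b B))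

/-- The Mukai pairing `(a,b,c)·(a',b',c') = -ac' + ⟨b,b'⟩ - a'c` on `H̃ ⊗ K`. -/
noncomputable def mukaiP (x y : K × (K ⊗[W] H) × K) : K :=
  -(x.1 * y.2.2) + (b.baseChange K) x.2.1 y.2.1 - x.2.2 * y.1

/-- Scaling a `W`-submodule of `H̃ ⊗ K` by `p`. -/
noncomputable def pScale (T : Submodule W (K × (K ⊗[W] H) × K)) :
    Submodule W (K × (K ⊗[W] H) × K) :=
  T.map (LinearMap.restrictScalars W ((p : K) •
    (LinearMap.id : (K × (K ⊗[W] H) × K) →ₗ[K] (K × (K ⊗[W] H) × K))))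

end Crystal

theorem stmt15 (p : ℕ) [Fact p.Prime] (hp : p ≠ 2)
    (k : Type*) [Field k] [IsAlgClosed k] [CharP k p]
    (K : Type*) [Field K] [Algebra (WittVector p k) K]
    [IsFractionRing (WittVector p k) K]
    (σK : K →+* K)
    (hσK : ∀ w : WittVector p k,
      σK (algebraMap (WittVector p k) K w) =
        algebraMap (WittVector p k) K (WittVector.frobenius w))
    (n : ℕ)
    (H : Type*) [AddCommGroup H] [Module (WittVector p k) H]
    (Φ : H →ₛₗ[(WittVector.frobenius : WittVector p k →+* WittVector p k)] H)
    (b : LinearMap.BilinForm (WittVector p k) H)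
    (hsymm : ∀ x y, b x y = b y x)
    (hcrys : IsK3Crystal p WittVector.frobenius n Φ b)
    (ΦK : (K ⊗[WittVector p k] H) →ₛₗ[σK] (K ⊗[WittVector p k] H))
    (hΦK : ∀ x : H,
      ΦK ((1 : K) ⊗ₜ[WittVector p k] x) = (1 : K) ⊗ₜ[WittVector p k] (Φ x))
    (B : K ⊗[WittVector p k] H)
    (hB : IsBField p (WittVector p k) K H σK ΦK B) :
    ∀ z ∈ eBT (WittVector p k) K H b B,
      PhiTilde p (WittVector p k) K H σK ΦK z ∈ eBT (WittVector p k) K H b B := by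
  have hπ0 : (p : WittVector p k) ≠ 0 := WittVector.p_nonzero p k
  have hαinj : Function.Injective (algebraMap (WittVector p k) K) :=
    IsFractionRing.injective (WittVector p k) K
  have hπ : (p : K) ≠ 0 := by
    intro h
    exact hπ0 (hαinj (by rw [map_natCast, map_zero, h]))
  have h2u : IsUnit (2 : WittVector p k) := by
    apply WittVector.isUnit_of_coeff_zero_ne_zero
    have h : ((2 : WittVector p k)).coeff 0 = (2 : k) := by
      have := map_ofNat (WittVector.constantCoeff (p := p) (R := k)) 2
      simpa [WittVector.constantCoeff] using this
    rw [h]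
    intro h2
    have hdvd : p ∣ 2 := (CharP.cast_eq_zero_iff k p 2).mp (by exact_mod_cast h2)
    exact hp (((Nat.prime_dvd_prime_iff_eq (Fact.out) Nat.prime_two).mp hdvd))
  obtain ⟨τ, hτ⟩ := h2u.exists_right_inv
  have hsm : ∀ (r : WittVector p k) (m : H),
      (algebraMap (WittVector p k) K r) • ((1:K) ⊗ₜ[WittVector p k] m)
        = (1:K) ⊗ₜ[WittVector p k] (r • m) := by
    intro r m
    rw [TensorProduct.tmul_smul, algebraMap_smul]
  have hβ : ∀ (s t : K) (m m' : H), (b.baseChange K) (s ⊗ₜ[WittVector p k] m)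
      (t ⊗ₜ[WittVector p k] m') = s * t * algebraMap (WittVector p k) K (b m m') := by
    intro s t m m'
    rw [LinearMap.BilinForm.baseChange_tmul, Algebra.smul_def]
    ring
  intro z hz
  rw [eBT, Submodule.mem_map] at hz ⊢
  obtain ⟨y, hy, rfl⟩ := hz
  obtain ⟨y1, y2, y3⟩ := y
  rw [Htilde, Submodule.mem_prod, Submodule.mem_prod] at hy
  obtain ⟨ha, hx, hc⟩ := hy
  rw [Wline, LinearMap.mem_range] at ha hc
  rw [iotaH, LinearMap.mem_range] at hx
  obtain ⟨a₀, ha⟩ := ha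
  obtain ⟨c₀, hc⟩ := hc
  obtain ⟨x₀, hx⟩ := hx
  simp only [Algebra.linearMap_apply] at ha hc
  simp only [TensorProduct.mk_apply] at hx
  subst ha hc hx
  obtain ⟨⟨w, hw⟩, ⟨u, v, hd⟩⟩ := hB
  have hBw : B = (p:K)⁻¹ • ((1:K) ⊗ₜ[WittVector p k] w) := by
    rw [← hw, smul_smul, inv_mul_cancel₀ hπ, one_smul]
  have hφw : (p:K) • ΦK B = (1:K) ⊗ₜ[WittVector p k] (Φ w) := by
    have := congrArg ΦK hw
    rw [LinearMap.map_smulₛₗ, map_natCast, hΦK] at this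
    exact this
  have hΦBw : ΦK B = (p:K)⁻¹ • ((1:K) ⊗ₜ[WittVector p k] (Φ w)) := by
    rw [← hφw, smul_smul, inv_mul_cancel₀ hπ, one_smul]
  refine ⟨(algebraMap _ K (p * WittVector.frobenius a₀),
    (1:K) ⊗ₜ[WittVector p k] (Φ x₀ - (p * WittVector.frobenius a₀) • u
      - (WittVector.frobenius a₀) • (Φ v)),
    algebraMap _ K (p * WittVector.frobenius c₀ - b (Φ x₀) u
      - p * WittVector.frobenius (b x₀ v)
      + WittVector.frobenius a₀ * (b u (Φ v) + p * τ * (b u u)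
        + p * τ * WittVector.frobenius (b v v)))),
    Submodule.mem_prod.mpr ⟨LinearMap.mem_range.mpr ⟨_, rfl⟩,
      Submodule.mem_prod.mpr ⟨LinearMap.mem_range.mpr ⟨_, rfl⟩,
        LinearMap.mem_range.mpr ⟨_, rfl⟩⟩⟩, ?_⟩
  simp only [LinearMap.restrictScalars_apply, eB, PhiTilde, LinearMap.coe_mk, AddHom.coe_mk]
  refine Prod.ext ?_ (Prod.ext ?_ ?_)
  · simp only [map_mul, map_natCast, hσK]
  · show (1:K) ⊗ₜ[WittVector p k] (Φ x₀ - (p * WittVector.frobenius a₀) • u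
      - (WittVector.frobenius a₀) • (Φ v))
      + algebraMap _ K (p * WittVector.frobenius a₀) • B
      = ΦK ((1:K) ⊗ₜ[WittVector p k] x₀ + algebraMap _ K a₀ • B)
    rw [map_add, LinearMap.map_smulₛₗ, hΦK, hσK]
    have hd2 := congrArg (fun z =>
      ((p:K) * algebraMap (WittVector p k) K (WittVector.frobenius a₀)) • z) hd
    simp only [smul_sub, smul_add, smul_smul, hΦK] at hd2
    rw [mul_comm ((p:K)) (algebraMap (WittVector p k) K (WittVector.frobenius a₀)),
      mul_assoc, mul_inv_cancel₀ hπ, mul_one] at hd2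
    rw [TensorProduct.tmul_sub, TensorProduct.tmul_sub]
    rw [← hsm, ← hsm]
    rw [map_mul, map_natCast]
    linear_combination (norm := module) hd2
  · have hβ1 : ∀ m : H, (b.baseChange K) ((1:K) ⊗ₜ[WittVector p k] m) B
        = (p:K)⁻¹ * algebraMap (WittVector p k) K (b m w) := by
      intro m
      rw [hBw, map_smul, smul_eq_mul, hβ]
      ring
    have hβΦB : ∀ m : H, (b.baseChange K) ((1:K) ⊗ₜ[WittVector p k] m) (ΦK B)
        = (p:K)⁻¹ * algebraMap (WittVector p k) K (b m (Φ w)) := by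
      intro m
      rw [hΦBw, map_smul, smul_eq_mul, hβ]
      ring
    have hβBB : (b.baseChange K) B B
        = (p:K)⁻¹ * (p:K)⁻¹ * algebraMap (WittVector p k) K (b w w) := by
      simp only [hBw, map_smul, LinearMap.smul_apply, smul_eq_mul, hβ]
      ring
    have hF1 : ∀ m : H, (p:K) * algebraMap (WittVector p k) K (b m w)
        = algebraMap (WittVector p k) K (b m (Φ w))
          + (p:K)^2 * algebraMap (WittVector p k) K (b m u)
          + (p:K) * algebraMap (WittVector p k) K (b m (Φ v)) := by
      intro m
      have h := congrArg (fun z => (b.baseChange K) ((1:K) ⊗ₜ[WittVector p k] m) z) hd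
      simp only [map_sub, map_add, map_smul, smul_eq_mul, hΦK] at h
      rw [hβ1 m, hβΦB m, hβ, hβ] at h
      field_simp at h
      refine mul_left_cancel₀ (pow_ne_zero 2 hπ) ?_
      linear_combination (p:K)^2 * h
    have hC : ∀ x y : H, algebraMap (WittVector p k) K (b (Φ x) (Φ y))
        = (p:K)^2 * algebraMap (WittVector p k) K (WittVector.frobenius (b x y)) := by
      intro x y
      have h := congrArg (algebraMap (WittVector p k) K) (hcrys.compat x y)
      simpa only [map_mul, map_pow, map_natCast] using h
    have hτK : (2:K) * algebraMap (WittVector p k) K τ = 1 := by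
      have h := congrArg (algebraMap (WittVector p k) K) hτ
      simpa only [map_mul, map_one, map_ofNat] using h
    have hSym : ∀ x y : H, algebraMap (WittVector p k) K (b x y)
        = algebraMap (WittVector p k) K (b y x) := fun x y => congrArg _ (hsymm x y)
    have hx'w : algebraMap (WittVector p k) K
        (b (Φ x₀ - (p * WittVector.frobenius a₀) • u - (WittVector.frobenius a₀) • (Φ v)) w)
        = algebraMap (WittVector p k) K (b (Φ x₀) w)
          - (p:K) * algebraMap (WittVector p k) K (WittVector.frobenius a₀)
              * algebraMap (WittVector p k) K (b u w)
          - algebraMap (WittVector p k) K (WittVector.frobenius a₀)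
              * algebraMap (WittVector p k) K (b (Φ v) w) := by
      simp only [map_sub, LinearMap.sub_apply, map_smul, LinearMap.smul_apply, smul_eq_mul,
        map_mul, map_natCast]
    dsimp only
    rw [hβ1, hx'w, hβBB, hβ1 x₀]
    simp only [map_add, map_sub, map_mul, map_inv₀, map_natCast, map_ofNat, map_div₀, hσK]
    have h2K : (2:K) ≠ 0 := by
      intro h2
      rw [h2, zero_mul] at hτK
      exact one_ne_zero hτK.symm
    have hSymσ : ∀ x y : H, algebraMap (WittVector p k) K (WittVector.frobenius (b x y))
        = algebraMap (WittVector p k) K (WittVector.frobenius (b y x)) :=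
      fun x y => congrArg _ (congrArg _ (hsymm x y))
    have E1 : algebraMap (WittVector p k) K (b (Φ x₀) w)
        = (p:K) * algebraMap (WittVector p k) K (b (Φ x₀) u)
          + (p:K) * algebraMap (WittVector p k) K (WittVector.frobenius (b x₀ w))
          + (p:K)^2 * algebraMap (WittVector p k) K (WittVector.frobenius (b x₀ v)) := by
      refine mul_left_cancel₀ hπ ?_
      linear_combination hF1 (Φ x₀) + hC x₀ w + (p:K) * hC x₀ v
    have E2 : algebraMap (WittVector p k) K (b (Φ v) w)
        = (p:K) * algebraMap (WittVector p k) K (WittVector.frobenius (b v w))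
          + (p:K) * algebraMap (WittVector p k) K (b u (Φ v))
          + (p:K)^2 * algebraMap (WittVector p k) K (WittVector.frobenius (b v v)) := by
      refine mul_left_cancel₀ hπ ?_
      linear_combination hF1 (Φ v) + hC v w + (p:K)^2 * hSym (Φ v) u + (p:K) * hC v v
    have E4 : (p:K) * algebraMap (WittVector p k) K (b w w)
        = algebraMap (WittVector p k) K (b w (Φ w))
          + (p:K)^2 * algebraMap (WittVector p k) K (b u w)
          + (p:K) * algebraMap (WittVector p k) K (b (Φ v) w) := by
      linear_combination hF1 w + (p:K)^2 * hSym w u + (p:K) * hSym w (Φ v)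
    have E5 : (p:K) * algebraMap (WittVector p k) K (b w (Φ w))
        = (p:K)^2 * algebraMap (WittVector p k) K (WittVector.frobenius (b w w))
          + (p:K)^2 * algebraMap (WittVector p k) K (b u (Φ w))
          + (p:K)^3 * algebraMap (WittVector p k) K (WittVector.frobenius (b v w)) := by
      linear_combination hF1 (Φ w) - (p:K) * hSym (Φ w) w + hC w w
        + (p:K)^2 * hSym (Φ w) u + (p:K) * hC w v + (p:K)^3 * hSymσ w v
    field_simp
    refine mul_left_cancel₀ (pow_ne_zero 2 hπ) ?_
    linear_combination 2*(p:K)^2*E1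
      + algebraMap (WittVector p k) K (WittVector.frobenius a₀) * ((p:K)*E4 + E5
        - (p:K)^2*(hF1 u) - (p:K)^2*E2
        + (p:K)^4*(algebraMap (WittVector p k) K (b u u)
          + algebraMap (WittVector p k) K (WittVector.frobenius (b v v)))*hτK)
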